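/- Let φ be the automorphism of F(A,B) with φ(A) = A, φ(B) = AB. Then for every cyclically reduced word w in which every syllable of B has exponent 1 and every syllable of A has exponent in {e, e+1} with e ≥ 1, the word φ⁻¹(w) is again of this form with exponents of A in {e-1, e}, after reduction. -/
import Mathlib


abbrev F2 := FreeGroup Bool

def A : F2 := FreeGroup.of true

def B : F2 := FreeGroup.of false

/-- `(x, y)` is a basis (free generating pair) of the free group `F2 = F(A,B)`. -/
def IsBasis (x y : F2) : Prop := ∃ e : F2 ≃* F2, e A = x ∧ e B = y

/-- `w` is primitive: it is part of some basis of `F2`. -/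
def IsPrimitive (w : F2) : Prop := ∃ x y : F2, IsBasis x y ∧ (w = x ∨ w = y)

theorem stmt_12 (φ : F2 ≃* F2) (hφA : φ A = A) (hφB : φ B = A * B)
    (j : ℕ) (hj : 1 ≤ j) (e : ℤ) (he : 1 ≤ e) (m : Fin j → ℤ)
    (hm : ∀ i, m i = e ∨ m i = e + 1)
    (w : F2) (hw : w = (List.ofFn fun i => A ^ (m i) * B).prod) :
    ∃ m' : Fin j → ℤ, (∀ i, m' i = e - 1 ∨ m' i = e) ∧
      φ.symm w = (List.ofFn fun i => A ^ (m' i) * B).prod := by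
  have hsA : φ.symm A = A := φ.injective (by
    rw [MulEquiv.apply_symm_apply, hφA])
  have hsB : φ.symm B = A⁻¹ * B := φ.injective (by
    rw [MulEquiv.apply_symm_apply, map_mul, map_inv, hφA, hφB, inv_mul_cancel_left])
  refine ⟨fun i => m i - 1, fun i => ?_, ?_⟩
  · rcases hm i with h | h <;> [left; right] <;> dsimp only <;> omega
  · rw [hw, ← MulEquiv.coe_toMonoidHom, MonoidHom.map_list_prod]
    rw [List.map_ofFn]
    refine congrArg List.prod (congrArg List.ofFn (funext fun i => ?_))
    simp only [Function.comp_apply, MulEquiv.coe_toMonoidHom, map_mul, map_zpow, hsA, hsB]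
    rw [← mul_assoc, ← zpow_sub_one]
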